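/- Let μ ⊆ λ be Young diagrams and let T ∈ X_μ^λ be splittable. Then cell(Φ(T)) = cell(T), and cell(T) is a mergeable cell of Φ(T); in particular Φ(T) is mergeable. -/

import Mathlib

/-- The cells of the skew shape `λ/μ`. -/
def skewCells (μ lam : YoungDiagram) : Finset (ℕ × ℕ) := lam.cells \ μ.cells

/-- The total order on cells induced by a filling `f`: a cell `c = (i,j)` is smaller than
`c' = (i',j')` if `f c < f c'`, or `f c = f c'` and `j < j'`, or
`f c = f c'`, `j = j'` and `i > i'`. -/
def cellLT (f : ℕ × ℕ → ℕ) (c c' : ℕ × ℕ) : Prop :=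
  f c < f c' ∨ (f c = f c' ∧ (c.2 < c'.2 ∨ (c.2 = c'.2 ∧ c'.1 < c.1)))

/-- `f` is a semistandard filling on the cell set `s`: entries are positive,
weakly increasing along rows (left to right) and strictly increasing down columns. -/
def IsSSYTOn (f : ℕ × ℕ → ℕ) (s : Finset (ℕ × ℕ)) : Prop :=
  (∀ c ∈ s, 0 < f c) ∧
  (∀ i j j', j ≤ j' → (i, j) ∈ s → (i, j') ∈ s → f (i, j) ≤ f (i, j')) ∧
  (∀ i i' j, i < i' → (i, j) ∈ s → (i', j) ∈ s → f (i, j) < f (i', j))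

/-- An element of `X_μ^λ`: a chain `μ = λ₀ ⊊ λ₁ ⊊ ⋯ ⊊ λ_k = λ` of Young diagrams together
with a filling of `λ/μ` whose restriction to each piece `λᵢ₊₁/λᵢ` is a semistandard Young
tableau.  (The tuple `(T⁽¹⁾, …, T⁽ᵏ⁾)` is recorded as the single concatenated filling
`entry`, normalized to be `0` outside `λ/μ`; the chain is recorded as a function on `ℕ`
constantly equal to `λ` from index `k` on.) -/
structure XTuple (μ lam : YoungDiagram) where
  k : ℕ
  chain : ℕ → YoungDiagram
  chain_zero : chain 0 = μ
  chain_last : ∀ i, k ≤ i → chain i = lam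
  chain_strict : ∀ i < k, (chain i).cells ⊂ (chain (i + 1)).cells
  entry : ℕ × ℕ → ℕ
  entry_eq_zero : ∀ c ∉ skewCells μ lam, entry c = 0
  piece_ssyt : ∀ i < k, IsSSYTOn entry ((chain (i + 1)).cells \ (chain i).cells)

/-- The cells of the `i`-th piece `T⁽ⁱ⁺¹⁾` (0-indexed: piece `i` has shape `λᵢ₊₁/λᵢ`). -/
def pieceCells {μ lam : YoungDiagram} (T : XTuple μ lam) (i : ℕ) : Finset (ℕ × ℕ) :=
  (T.chain (i + 1)).cells \ (T.chain i).cells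

/-- The length `ℓ(T) = k` of an element of `X_μ^λ`. -/
def XTuple.len {μ lam : YoungDiagram} (T : XTuple μ lam) : ℕ := T.k

/-- The cell `c`, lying in piece `i`, is splittable: its piece has more than one cell and
`c` is the largest cell of its piece. -/
def SplittableAt {μ lam : YoungDiagram} (T : XTuple μ lam) (c : ℕ × ℕ) (i : ℕ) : Prop :=
  i < T.k ∧ c ∈ pieceCells T i ∧ 1 < (pieceCells T i).card ∧
    ∀ c' ∈ pieceCells T i, c' ≠ c → cellLT T.entry c' c

/-- The cell `c` is splittable in `T`. -/
def SplittableCell {μ lam : YoungDiagram} (T : XTuple μ lam) (c : ℕ × ℕ) : Prop :=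
  ∃ i, SplittableAt T c i

/-- The cell `c`, lying in piece `i`, is mergeable: it is not in the first piece, its piece
is a single cell, the union of its piece with the previous piece is semistandard, and `c`
is larger than every cell of the previous piece. -/
def MergeableAt {μ lam : YoungDiagram} (T : XTuple μ lam) (c : ℕ × ℕ) (i : ℕ) : Prop :=
  1 ≤ i ∧ i < T.k ∧ c ∈ pieceCells T i ∧ (pieceCells T i).card = 1 ∧
    IsSSYTOn T.entry (pieceCells T (i - 1) ∪ pieceCells T i) ∧
    ∀ c' ∈ pieceCells T (i - 1), cellLT T.entry c' c

/-- The cell `c` is mergeable in `T`. -/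
def MergeableCell {μ lam : YoungDiagram} (T : XTuple μ lam) (c : ℕ × ℕ) : Prop :=
  ∃ i, MergeableAt T c i

/-- `cell(T)`: the largest cell of `T` (in the total order `cellLT T.entry`) among the
splittable or mergeable cells, or `none` (i.e. `∅`) if there is no such cell. -/
noncomputable def cellOf {μ lam : YoungDiagram} (T : XTuple μ lam) : Option (ℕ × ℕ) := by
  classical
  exact if h : ∃ c, (SplittableCell T c ∨ MergeableCell T c) ∧
      ∀ c', (SplittableCell T c' ∨ MergeableCell T c') → c' ≠ c → cellLT T.entry c' c
    then some h.choose else none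

/-- `T` is splittable if `cell(T)` is a splittable cell. -/
def XTuple.Splittable {μ lam : YoungDiagram} (T : XTuple μ lam) : Prop :=
  ∃ c, cellOf T = some c ∧ SplittableCell T c

/-- `T` is mergeable if `cell(T)` is a mergeable cell. -/
def XTuple.Mergeable {μ lam : YoungDiagram} (T : XTuple μ lam) : Prop :=
  ∃ c, cellOf T = some c ∧ MergeableCell T c

/-- The graph of the map `Φ`:  if `cell(T)` is splittable and lies in piece `i`, the piece
is replaced by the pair `(T⁽ⁱ⁾ ∖ {cell(T)}, {cell(T)})`, i.e. the Young diagram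
`λᵢ₊₁ ∖ {cell(T)}` is inserted into the chain; if `cell(T)` is mergeable and lies in piece
`i`, the pieces `i-1` and `i` are merged, i.e. `λᵢ` is deleted from the chain; if
`cell(T) = ∅` then `T` is fixed.  The filling is unchanged in all cases. -/
def PhiRel {μ lam : YoungDiagram} (T T' : XTuple μ lam) : Prop :=
  (∃ c i, cellOf T = some c ∧ SplittableAt T c i ∧
      T'.k = T.k + 1 ∧ T'.entry = T.entry ∧
      (∀ j, j ≤ i → T'.chain j = T.chain j) ∧
      (T'.chain (i + 1)).cells = (T.chain (i + 1)).cells.erase c ∧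
      (∀ j, i + 2 ≤ j → T'.chain j = T.chain (j - 1))) ∨
  (∃ c i, cellOf T = some c ∧ MergeableAt T c i ∧
      T'.k + 1 = T.k ∧ T'.entry = T.entry ∧
      (∀ j, j < i → T'.chain j = T.chain j) ∧
      (∀ j, i ≤ j → T'.chain j = T.chain (j + 1))) ∨
  (cellOf T = none ∧ T' = T)

/-- The map `Φ : X_μ^λ → X_μ^λ`. -/
noncomputable def Phi {μ lam : YoungDiagram} (T : XTuple μ lam) : XTuple μ lam := by
  classical
  exact if h : ∃ T', PhiRel T T' then h.choose else T

section Aux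

variable {μ lam : YoungDiagram}

lemma cellLT_asymm {f : ℕ × ℕ → ℕ} {a b : ℕ × ℕ}
    (h1 : cellLT f a b) (h2 : cellLT f b a) : False := by
  unfold cellLT at h1 h2; omega

lemma cellLT_trans {f : ℕ × ℕ → ℕ} {a b c : ℕ × ℕ}
    (h1 : cellLT f a b) (h2 : cellLT f b c) : cellLT f a c := by
  unfold cellLT at h1 h2 ⊢; omega

lemma isSSYTOn_mono {f : ℕ × ℕ → ℕ} {s t : Finset (ℕ × ℕ)} (hst : s ⊆ t)
    (h : IsSSYTOn f t) : IsSSYTOn f s :=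
  ⟨fun c hc => h.1 c (hst hc), fun i j j' hj h1 h2 => h.2.1 i j j' hj (hst h1) (hst h2),
   fun i i' j hi h1 h2 => h.2.2 i i' j hi (hst h1) (hst h2)⟩

lemma chain_mono (T : XTuple μ lam) : ∀ {i j : ℕ}, i ≤ j →
    (T.chain i).cells ⊆ (T.chain j).cells := by
  have step : ∀ i, (T.chain i).cells ⊆ (T.chain (i + 1)).cells := by
    intro i
    by_cases h : i < T.k
    · exact (T.chain_strict i h).subset
    · rw [T.chain_last i (by omega), T.chain_last (i + 1) (by omega)]
  intro i j hij
  induction hij with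
  | refl => exact subset_rfl
  | step _ ih => exact ih.trans (step _)

lemma piece_disj (T : XTuple μ lam) {c : ℕ × ℕ} {i j : ℕ} (hij : i < j)
    (hi : c ∈ pieceCells T i) (hj : c ∈ pieceCells T j) : False := by
  simp only [pieceCells, Finset.mem_sdiff] at hi hj
  exact hj.2 (chain_mono T (by omega : i + 1 ≤ j) hi.1)

lemma piece_mem_unique (T : XTuple μ lam) {c : ℕ × ℕ} {i j : ℕ}
    (hi : c ∈ pieceCells T i) (hj : c ∈ pieceCells T j) : i = j := by
  rcases lt_trichotomy i j with h | h | h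
  · exact absurd (piece_disj T h hi hj) (by simp)
  · exact h
  · exact absurd (piece_disj T h hj hi) (by simp)

lemma cellOf_spec {T : XTuple μ lam} {c : ℕ × ℕ} (h : cellOf T = some c) :
    (SplittableCell T c ∨ MergeableCell T c) ∧
      ∀ c', (SplittableCell T c' ∨ MergeableCell T c') → c' ≠ c → cellLT T.entry c' c := by
  unfold cellOf at h
  split at h
  · rename_i hex
    injection h with h
    exact h ▸ hex.choose_spec
  · exact absurd h (by simp)

lemma cellOf_eq_some {T : XTuple μ lam} {c : ℕ × ℕ}
    (h1 : SplittableCell T c ∨ MergeableCell T c)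
    (h2 : ∀ c', (SplittableCell T c' ∨ MergeableCell T c') → c' ≠ c → cellLT T.entry c' c) :
    cellOf T = some c := by
  have hex : ∃ c, (SplittableCell T c ∨ MergeableCell T c) ∧
      ∀ c', (SplittableCell T c' ∨ MergeableCell T c') → c' ≠ c → cellLT T.entry c' c :=
    ⟨c, h1, h2⟩
  unfold cellOf
  rw [dif_pos hex]
  have hspec := hex.choose_spec
  by_contra hne
  have hne' : hex.choose ≠ c := by simpa using hne
  exact cellLT_asymm (h2 _ hspec.1 hne') (hspec.2 c h1 fun e => hne' e.symm)

lemma no_cell_after {T : XTuple μ lam} {c : ℕ × ℕ} {i : ℕ} (h : SplittableAt T c i)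
    {a : ℕ × ℕ} (ha : a ∈ (T.chain (i + 1)).cells) (hca : c ≤ a) (hne : a ≠ c) : False := by
  obtain ⟨hik, hc, _, hmax⟩ := h
  have hssyt := T.piece_ssyt i hik
  have hcmem : c ∈ (T.chain (i + 1)).cells ∧ c ∉ (T.chain i).cells := by
    simpa [pieceCells, Finset.mem_sdiff] using hc
  obtain ⟨hca1, hca2⟩ := hca
  have hlt : c.1 < a.1 ∨ c.2 < a.2 := by
    by_contra hcon
    push_neg at hcon
    exact hne (Prod.ext (by omega) (by omega))
  -- the relevant neighbor of c
  obtain ⟨d, hd_le, hd_shape⟩ :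
      ∃ d : ℕ × ℕ, d ≤ a ∧ ((d = (c.1 + 1, c.2)) ∨ (d = (c.1, c.2 + 1))) := by
    rcases hlt with h' | h'
    · exact ⟨(c.1 + 1, c.2), ⟨by omega, by omega⟩, Or.inl rfl⟩
    · exact ⟨(c.1, c.2 + 1), ⟨by omega, by omega⟩, Or.inr rfl⟩
  have hd_cells : d ∈ (T.chain (i + 1)).cells := (T.chain (i + 1)).isLowerSet hd_le ha
  have hd_not : d ∉ (T.chain i).cells := by
    intro hmem
    exact hcmem.2 ((T.chain i).isLowerSet
      (by rcases hd_shape with rfl | rfl <;> exact ⟨by simp, by simp⟩) hmem)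
  have hd_piece : d ∈ pieceCells T i := by
    simp [pieceCells, Finset.mem_sdiff, hd_cells, hd_not]
  have hd_ne : d ≠ c := by
    rcases hd_shape with rfl | rfl <;> intro e <;>
      · have := congrArg Prod.fst e; have := congrArg Prod.snd e; simp_all
  have hLT := hmax d hd_piece hd_ne
  rcases hd_shape with rfl | rfl
  · -- column neighbor: entry strictly increases
    have := hssyt.2.2 c.1 (c.1 + 1) c.2 (by omega) (by simpa [pieceCells] using hc)
      (by simpa [pieceCells] using hd_piece)
    unfold cellLT at hLT
    simp only [Prod.mk.eta] at hLT this
    omega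
  · -- row neighbor: entry weakly increases
    have := hssyt.2.1 c.1 c.2 (c.2 + 1) (by omega) (by simpa [pieceCells] using hc)
      (by simpa [pieceCells] using hd_piece)
    unfold cellLT at hLT
    simp only [Prod.mk.eta] at hLT this
    omega

lemma split_lowerSet {T : XTuple μ lam} {c : ℕ × ℕ} {i : ℕ} (h : SplittableAt T c i) :
    IsLowerSet (((T.chain (i + 1)).cells.erase c : Finset (ℕ × ℕ)) : Set (ℕ × ℕ)) := by
  intro a b hba ha
  simp only [Finset.coe_erase, Set.mem_diff, Finset.mem_coe, Set.mem_singleton_iff] at ha ⊢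
  refine ⟨(T.chain (i + 1)).isLowerSet hba ha.1, ?_⟩
  rintro rfl
  exact no_cell_after h ha.1 hba (by rintro rfl; exact ha.2 rfl)

/-- The result of splitting `T` at the splittable cell `c` of piece `i`. -/
noncomputable def splitTuple (T : XTuple μ lam) (c : ℕ × ℕ) (i : ℕ)
    (h : SplittableAt T c i) : XTuple μ lam where
  k := T.k + 1
  chain := fun j => if j ≤ i then T.chain j else if j = i + 1 then
    ⟨(T.chain (i + 1)).cells.erase c, split_lowerSet h⟩ else T.chain (j - 1)
  chain_zero := by simp [T.chain_zero]
  chain_last := by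
    intro j hj
    have hik := h.1
    rw [if_neg (by omega), if_neg (by omega)]
    exact T.chain_last (j - 1) (by omega)
  chain_strict := by
    intro j hj
    have hik := h.1
    have hcmem : c ∈ (T.chain (i + 1)).cells ∧ c ∉ (T.chain i).cells := by
      simpa [pieceCells, Finset.mem_sdiff] using h.2.1
    rcases Nat.lt_or_ge j i with hji | hji
    · rw [if_pos (by omega), if_pos (by omega)]
      exact T.chain_strict j (by omega)
    rcases Nat.eq_or_lt_of_le hji with rfl | hji'
    · rw [if_pos le_rfl, if_neg (by omega), if_pos rfl]
      constructor
      · intro x hx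
        simp only [Finset.mem_erase]
        exact ⟨by rintro rfl; exact hcmem.2 hx, chain_mono T (by omega) hx⟩
      · intro hcon
        obtain ⟨d, hd, hdne⟩ := Finset.exists_mem_ne h.2.2.1 c
        simp only [pieceCells, Finset.mem_sdiff] at hd
        exact hd.2 (hcon (Finset.mem_erase.mpr ⟨hdne, hd.1⟩))
    rcases Nat.eq_or_lt_of_le hji' with rfl | hji''
    · rw [if_neg (by omega), if_pos rfl, if_neg (by omega), if_neg (by omega)]
      have : i + 1 + 1 - 1 = i + 1 := by omega
      rw [this]
      exact Finset.erase_ssubset hcmem.1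
    · rw [if_neg (by omega), if_neg (by omega), if_neg (by omega), if_neg (by omega)]
      have e : j + 1 - 1 = (j - 1) + 1 := by omega
      rw [e]
      exact T.chain_strict (j - 1) (by omega)
  entry := T.entry
  entry_eq_zero := T.entry_eq_zero
  piece_ssyt := by
    intro j hj
    have hik := h.1
    have hcmem : c ∈ (T.chain (i + 1)).cells ∧ c ∉ (T.chain i).cells := by
      simpa [pieceCells, Finset.mem_sdiff] using h.2.1
    rcases Nat.lt_or_ge j i with hji | hji
    · rw [if_pos (by omega), if_pos (by omega)]
      exact T.piece_ssyt j (by omega)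
    rcases Nat.eq_or_lt_of_le hji with rfl | hji'
    · rw [if_pos le_rfl, if_neg (by omega), if_pos rfl]
      refine isSSYTOn_mono ?_ (T.piece_ssyt i hik)
      intro x hx
      simp only [Finset.mem_sdiff, Finset.mem_erase] at hx ⊢
      exact ⟨hx.1.2, hx.2⟩
    rcases Nat.eq_or_lt_of_le hji' with rfl | hji''
    · rw [if_neg (by omega), if_pos rfl, if_neg (by omega), if_neg (by omega)]
      have : i + 1 + 1 - 1 = i + 1 := by omega
      rw [this]
      refine isSSYTOn_mono ?_ (T.piece_ssyt i hik)
      intro x hx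
      simp only [Finset.mem_sdiff, Finset.mem_erase] at hx
      have hxc : x = c := by
        by_contra hxc
        exact hx.2 ⟨hxc, hx.1⟩
      subst hxc
      simp only [Finset.mem_sdiff]
      exact ⟨hcmem.1, hcmem.2⟩
    · rw [if_neg (by omega), if_neg (by omega), if_neg (by omega), if_neg (by omega)]
      have e : j + 1 - 1 = (j - 1) + 1 := by omega
      rw [e]
      exact T.piece_ssyt (j - 1) (by omega)

lemma phiRel_splitTuple {T : XTuple μ lam} {c : ℕ × ℕ} {i : ℕ}
    (hc : cellOf T = some c) (h : SplittableAt T c i) :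
    PhiRel T (splitTuple T c i h) := by
  refine Or.inl ⟨c, i, hc, h, rfl, rfl, ?_, ?_, ?_⟩
  · intro j hj
    show (if j ≤ i then T.chain j else _) = T.chain j
    rw [if_pos hj]
  · show (if i + 1 ≤ i then T.chain (i + 1) else if i + 1 = i + 1 then
      (⟨(T.chain (i + 1)).cells.erase c, split_lowerSet h⟩ : YoungDiagram)
      else T.chain (i + 1 - 1)).cells = _
    rw [if_neg (by omega), if_pos rfl]
  · intro j hj
    show (if j ≤ i then T.chain j else if j = i + 1 then _ else T.chain (j - 1)) = T.chain (j - 1)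
    rw [if_neg (by omega), if_neg (by omega)]

lemma merge_ssyt {T : XTuple μ lam} {c' : ℕ × ℕ} {i : ℕ} (hik : i < T.k)
    (hc' : c' ∉ (T.chain (i + 1)).cells) (hpos : 0 < T.entry c')
    (hall : ∀ d ∈ pieceCells T i, cellLT T.entry d c') :
    IsSSYTOn T.entry (pieceCells T i ∪ {c'}) := by
  have hT : IsSSYTOn T.entry (pieceCells T i) := T.piece_ssyt i hik
  have hsub : pieceCells T i ⊆ (T.chain (i + 1)).cells := by
    intro x hx; simp only [pieceCells, Finset.mem_sdiff] at hx; exact hx.1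
  refine ⟨?_, ?_, ?_⟩
  · intro d hd
    rcases Finset.mem_union.mp hd with hd | hd
    · exact hT.1 d hd
    · rw [Finset.mem_singleton.mp hd]; exact hpos
  · intro r j j' hjj' h1 h2
    rcases Finset.mem_union.mp h1 with h1 | h1 <;>
      rcases Finset.mem_union.mp h2 with h2 | h2
    · exact hT.2.1 r j j' hjj' h1 h2
    · rw [Finset.mem_singleton] at h2
      have hlt := hall _ h1
      rw [← h2] at hlt
      unfold cellLT at hlt
      simp only at hlt
      omega
    · rw [Finset.mem_singleton] at h1
      exact absurd ((T.chain (i + 1)).isLowerSet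
        (show ((r, j) : ℕ × ℕ) ≤ (r, j') from ⟨le_rfl, hjj'⟩) (hsub h2))
        (h1 ▸ hc')
    · rw [Finset.mem_singleton] at h1 h2
      rw [← h2] at h1
      rw [h1]
  · intro r r' j hrr' h1 h2
    rcases Finset.mem_union.mp h1 with h1 | h1 <;>
      rcases Finset.mem_union.mp h2 with h2 | h2
    · exact hT.2.2 r r' j hrr' h1 h2
    · rw [Finset.mem_singleton] at h2
      have hlt := hall _ h1
      rw [← h2] at hlt
      unfold cellLT at hlt
      simp only at hlt
      omega
    · rw [Finset.mem_singleton] at h1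
      exact absurd ((T.chain (i + 1)).isLowerSet
        (show ((r, j) : ℕ × ℕ) ≤ (r', j) from ⟨le_of_lt hrr', le_rfl⟩) (hsub h2))
        (h1 ▸ hc')
    · rw [Finset.mem_singleton] at h1 h2
      rw [← h2] at h1
      have : r = r' := (Prod.mk.injEq _ _ _ _ ▸ h1).1
      omega

end Aux

/-- If `T ∈ X_μ^λ` is splittable, then `cell(Φ(T)) = cell(T)` and `cell(T)` is a mergeable
cell of `Φ(T)`; in particular `Φ(T)` is mergeable. -/
theorem cellOf_phi_of_splittable (μ lam : YoungDiagram) (hsub : μ ≤ lam)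
    (T : XTuple μ lam) (c : ℕ × ℕ)
    (hc : cellOf T = some c) (hs : SplittableCell T c) :
    cellOf (Phi T) = some c ∧ MergeableCell (Phi T) c ∧ (Phi T).Mergeable := by
  classical
  obtain ⟨i', hi'⟩ := hs
  have hmaxT := (cellOf_spec hc).2
  have hex : ∃ T', PhiRel T T' := ⟨splitTuple T c i' hi', phiRel_splitTuple hc hi'⟩
  have hrel : PhiRel T (Phi T) := by
    unfold Phi
    rw [dif_pos hex]
    exact hex.choose_spec
  rcases hrel with ⟨c0, i, hc0, hsi, hk, hent, hlow, hmid, hhigh⟩ |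
    ⟨c0, i0, hc0, hm0, _⟩ | ⟨hnone, _⟩
  · -- splitting branch
    rw [hc] at hc0
    injection hc0 with e
    subst e
    obtain ⟨hik, hcmem, hcard, hm⟩ := hsi
    have hcc : c ∈ (T.chain (i + 1)).cells ∧ c ∉ (T.chain i).cells := by
      simpa [pieceCells, Finset.mem_sdiff] using hcmem
    -- piece computations for Phi T
    have hplow : ∀ j, j + 1 ≤ i → pieceCells (Phi T) j = pieceCells T j := by
      intro j hj
      unfold pieceCells
      rw [hlow j (by omega), hlow (j + 1) hj]
    have hpi : pieceCells (Phi T) i = (pieceCells T i).erase c := by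
      unfold pieceCells
      rw [hmid, hlow i le_rfl]
      ext x
      simp only [Finset.mem_sdiff, Finset.mem_erase]
      tauto
    have hpi1 : pieceCells (Phi T) (i + 1) = {c} := by
      unfold pieceCells
      rw [hhigh (i + 2) (by omega), hmid]
      rw [show i + 2 - 1 = i + 1 from rfl]
      ext x
      simp only [Finset.mem_sdiff, Finset.mem_erase, Finset.mem_singleton]
      constructor
      · rintro ⟨hx1, hx2⟩; by_contra hxc; exact hx2 ⟨hxc, hx1⟩
      · rintro rfl; exact ⟨hcc.1, fun hcon => hcon.1 rfl⟩
    have hphigh : ∀ j, i + 2 ≤ j → pieceCells (Phi T) j = pieceCells T (j - 1) := by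
      intro j hj
      unfold pieceCells
      rw [hhigh (j + 1) (by omega), hhigh j hj]
      rw [show j + 1 - 1 = (j - 1) + 1 by omega]
    -- c is mergeable in Phi T at i+1
    have hmerge : MergeableAt (Phi T) c (i + 1) := by
      refine ⟨by omega, by rw [hk]; omega, ?_, ?_, ?_, ?_⟩
      · rw [hpi1]; exact Finset.mem_singleton_self c
      · rw [hpi1]; simp
      · rw [show i + 1 - 1 = i from rfl, hent, hpi, hpi1,
          Finset.union_comm, ← Finset.insert_eq, Finset.insert_erase hcmem]
        exact T.piece_ssyt i hik
      · rw [show i + 1 - 1 = i from rfl, hpi, hent]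
        intro c' hc'
        exact hm c' (Finset.mem_of_mem_erase hc') (Finset.ne_of_mem_erase hc')
    -- maximality of c among splittable/mergeable cells of Phi T
    have hmax' : ∀ c', (SplittableCell (Phi T) c' ∨ MergeableCell (Phi T) c') → c' ≠ c →
        cellLT (Phi T).entry c' c := by
      rw [hent]
      intro c' hsc hne
      rcases hsc with ⟨j, hj⟩ | ⟨j, hj⟩
      · -- splittable cell of Phi T
        obtain ⟨hjk, hmem, hcard', hmx⟩ := hj
        rw [hk] at hjk
        rcases Nat.lt_or_ge j i with hji | hji
        · rw [hplow j (by omega)] at hmem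
          have hS : SplittableAt T c' j := by
            refine ⟨by omega, hmem, by rwa [hplow j (by omega)] at hcard', ?_⟩
            intro d hd hdne
            have := hmx d (by rwa [hplow j (by omega)]) hdne
            rwa [hent] at this
          have hne' : c' ≠ c := fun e => by
            subst e; exact absurd (piece_disj T hji hmem hcmem) (by simp)
          exact hmaxT c' (Or.inl ⟨j, hS⟩) hne'
        rcases Nat.eq_or_lt_of_le hji with rfl | hji'
        · rw [hpi] at hmem
          exact hm c' (Finset.mem_of_mem_erase hmem) (Finset.ne_of_mem_erase hmem)
        rcases Nat.lt_or_ge j (i + 2) with hj2 | hj2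
        · -- j = i + 1 : piece has one cell, contradiction
          rw [show j = i + 1 by omega, hpi1] at hcard'
          simp at hcard'
        · rw [hphigh j hj2] at hmem
          have hS : SplittableAt T c' (j - 1) := by
            refine ⟨by omega, hmem, by rwa [hphigh j hj2] at hcard', ?_⟩
            intro d hd hdne
            have := hmx d (by rwa [hphigh j hj2]) hdne
            rwa [hent] at this
          have hne' : c' ≠ c := fun e => by
            subst e
            exact absurd (piece_disj T (show i < j - 1 by omega) hcmem hmem) (by simp)
          exact hmaxT c' (Or.inl ⟨j - 1, hS⟩) hne'
      · -- mergeable cell of Phi T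
        obtain ⟨hj1, hjk, hmem, hcard', hssyt', hgt'⟩ := hj
        rw [hk] at hjk
        rcases Nat.lt_or_ge j i with hji | hji
        · have hM : MergeableAt T c' j := by
            refine ⟨hj1, by omega, by rwa [hplow j (by omega)] at hmem,
              by rwa [hplow j (by omega)] at hcard', ?_, ?_⟩
            · rw [hplow (j - 1) (by omega), hplow j (by omega), hent] at hssyt'
              exact hssyt'
            · intro d hd
              have := hgt' d (by rwa [hplow (j - 1) (by omega)])
              rwa [hent] at this
          have hmem' : c' ∈ pieceCells T j := by rwa [hplow j (by omega)] at hmem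
          have hne' : c' ≠ c := fun e => by
            subst e; exact absurd (piece_disj T hji hmem' hcmem) (by simp)
          exact hmaxT c' (Or.inr ⟨j, hM⟩) hne'
        rcases Nat.eq_or_lt_of_le hji with rfl | hji'
        · rw [hpi] at hmem
          exact hm c' (Finset.mem_of_mem_erase hmem) (Finset.ne_of_mem_erase hmem)
        rcases Nat.lt_or_ge j (i + 2) with hj2 | hj2
        · -- j = i + 1 : c' = c, contradiction
          rw [show j = i + 1 by omega, hpi1, Finset.mem_singleton] at hmem
          exact absurd hmem hne
        rcases Nat.lt_or_ge j (i + 3) with hj3 | hj3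
        · -- j = i + 2 : c' is mergeable in T at i + 1
          rw [show j = i + 2 by omega] at hmem hcard' hssyt' hgt' hjk
          rw [hphigh (i + 2) (by omega), show i + 2 - 1 = i + 1 from rfl] at hmem hcard'
          rw [show i + 2 - 1 = i + 1 from rfl, hpi1, hphigh (i + 2) (by omega),
            show i + 2 - 1 = i + 1 from rfl, hent] at hssyt'
          rw [show i + 2 - 1 = i + 1 from rfl, hpi1] at hgt'
          have hcc' : cellLT T.entry c c' := by
            have := hgt' c (Finset.mem_singleton_self c)
            rwa [hent] at this
          have hposc' : 0 < T.entry c' := hssyt'.1 c' (Finset.mem_union_right _ hmem)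
          have hc'notin : c' ∉ (T.chain (i + 1)).cells := by
            have hm2 := hmem
            simp only [pieceCells, Finset.mem_sdiff] at hm2
            exact hm2.2
          have hall : ∀ d ∈ pieceCells T i, cellLT T.entry d c' := by
            intro d hd
            by_cases hdc : d = c
            · rw [hdc]; exact hcc'
            · exact cellLT_trans (hm d hd hdc) hcc'
          have hM : MergeableAt T c' (i + 1) := by
            refine ⟨by omega, by omega, hmem, hcard', ?_, ?_⟩
            · rw [show i + 1 - 1 = i from rfl]
              have hone : pieceCells T (i + 1) = {c'} := by
                rw [Finset.card_eq_one] at hcard'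
                obtain ⟨a, ha⟩ := hcard'
                rw [ha, Finset.mem_singleton] at hmem
                rw [ha, hmem]
              rw [hone]
              exact merge_ssyt (by omega) hc'notin hposc' hall
            · rw [show i + 1 - 1 = i from rfl]
              exact hall
          have hne' : c' ≠ c := fun e => by
            subst e
            exact absurd (piece_disj T (show i < i + 1 by omega) hcmem hmem) (by simp)
          exact hmaxT c' (Or.inr ⟨i + 1, hM⟩) hne'
        · -- j ≥ i + 3
          have hM : MergeableAt T c' (j - 1) := by
            refine ⟨by omega, by omega, by rwa [hphigh j (by omega)] at hmem,
              by rwa [hphigh j (by omega)] at hcard', ?_, ?_⟩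
            · rw [hphigh (j - 1) (by omega), hphigh j (by omega), hent] at hssyt'
              exact hssyt'
            · intro d hd
              have := hgt' d (by rwa [hphigh (j - 1) (by omega)])
              rwa [hent] at this
          have hmem' : c' ∈ pieceCells T (j - 1) := by rwa [hphigh j (by omega)] at hmem
          have hne' : c' ≠ c := fun e => by
            subst e
            exact absurd (piece_disj T (show i < j - 1 by omega) hcmem hmem') (by simp)
          exact hmaxT c' (Or.inr ⟨j - 1, hM⟩) hne'
    have hcellOf : cellOf (Phi T) = some c :=
      cellOf_eq_some (Or.inr ⟨i + 1, hmerge⟩) hmax'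
    exact ⟨hcellOf, ⟨i + 1, hmerge⟩, ⟨c, hcellOf, ⟨i + 1, hmerge⟩⟩⟩
  · -- merging branch: impossible
    rw [hc] at hc0
    injection hc0 with e
    subst e
    have heq := piece_mem_unique T hi'.2.1 hm0.2.2.1
    have h1 := hi'.2.2.1
    have h2 := hm0.2.2.2.1
    rw [heq] at h1
    omega
  · -- fixed branch: impossible
    rw [hc] at hnone
    cases hnone
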